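/- For every integer α ≥ 2 and every n divisible by 2α+2 (with n sufficiently large), there exists a circular arc graph G on n vertices with maximum degree exactly nα/(2(α+1)) + (α+2) = n(α−1)/(2α) + n/(2α(α+1)) + (α+2) and boxicity strictly greater than α. -/

import Mathlib

noncomputable section

/-- The circle of circumference `2π`, as `ℝ / 2πℤ`. -/
abbrev Circle2pi := AddCircle (2 * Real.pi)

/-- The closed arc traversed clockwise (decreasing angle) from the angle `s`
(its left endpoint) through angular length `ℓ`; its right endpoint is `s - ℓ`. -/
def arcSet (s ℓ : ℝ) : Set Circle2pi :=
  (fun t : ℝ => ((s - t : ℝ) : Circle2pi)) '' Set.Icc 0 ℓ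

/-- `f` is a circular-arc representation of `G`: each vertex gets a (start angle, length)
pair describing a proper closed arc, and distinct vertices are adjacent iff
their arcs intersect. -/
def IsCARep {V : Type*} (G : SimpleGraph V) (f : V → ℝ × ℝ) : Prop :=
  (∀ v, 0 < (f v).2 ∧ (f v).2 < 2 * Real.pi) ∧
  ∀ u v, u ≠ v →
    (G.Adj u v ↔ (arcSet (f u).1 (f u).2 ∩ arcSet (f v).1 (f v).2).Nonempty)

/-- `box(G) ≤ k`: `G` is the intersection of `k` interval graphs on `V`. -/
def BoxicityLE {V : Type*} (G : SimpleGraph V) (k : ℕ) : Prop :=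
  ∃ I : Fin k → V → Set ℝ,
    (∀ i v, ∃ a b : ℝ, a ≤ b ∧ I i v = Set.Icc a b) ∧
    ∀ u v : V, u ≠ v → (G.Adj u v ↔ ∀ i, (I i u ∩ I i v).Nonempty)

/-- Reflection of the circle across the line through the center at angle `θ`. -/
def reflMap (θ : ℝ) : Circle2pi → Circle2pi := fun p => ((2 * θ : ℝ) : Circle2pi) - p

/-- The open sector `S_k` (numbered anticlockwise from the positive x-axis):
points of the circle with angle strictly between `πk/α` and `π(k+1)/α`. -/
def sector (α : ℕ) (k : ℤ) : Set Circle2pi :=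
  (fun t : ℝ => (t : Circle2pi)) '' Set.Ioo (Real.pi * k / α) (Real.pi * (k + 1) / α)

/-- Signed coordinate of a point of the circle when orthogonally projected onto the
line through the center at angle `θ` (identified with ℝ). -/
def projCoord (θ : ℝ) : Circle2pi → ℝ :=
  Function.Periodic.lift
    (f := fun x : ℝ => Real.cos (x - θ))
    (fun x => by simp only []; rw [show x + 2 * Real.pi - θ = (x - θ) + 2 * Real.pi by ring,
      Real.cos_add_two_pi])


section Aux
open Real Set
lemma circle_coe_eq {x y : ℝ} :
    (x : Circle2pi) = (y : Circle2pi) ↔ ∃ k : ℤ, x - y = k * (2 * π) := by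
  rw [QuotientAddGroup.eq_iff_sub_mem, AddSubgroup.mem_zmultiples_iff]
  constructor
  · rintro ⟨k, hk⟩; exact ⟨k, by rw [← hk]; simp [zsmul_eq_mul]⟩
  · rintro ⟨k, hk⟩; exact ⟨k, by rw [hk]; simp [zsmul_eq_mul]⟩

lemma arc_eq_image (s ℓ : ℝ) :
    arcSet s ℓ = (fun x : ℝ => (x : Circle2pi)) '' Set.Icc (s - ℓ) s := by
  unfold arcSet
  rw [show (fun t : ℝ => ((s - t : ℝ) : Circle2pi)) = (fun x : ℝ => (x : Circle2pi)) ∘ (fun t => s - t) by rfl,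
    Set.image_comp, Set.image_const_sub_Icc]
  norm_num

lemma arc_inter_iff {s ℓ s' ℓ' : ℝ} :
    (arcSet s ℓ ∩ arcSet s' ℓ').Nonempty ↔
      ∃ x ∈ Set.Icc (s - ℓ) s, ∃ y ∈ Set.Icc (s' - ℓ') s', ∃ k : ℤ, x - y = k * (2 * π) := by
  rw [arc_eq_image, arc_eq_image]
  constructor
  · rintro ⟨p, ⟨x, hx, rfl⟩, ⟨y, hy, hxy⟩⟩
    exact ⟨x, hx, y, hy, circle_coe_eq.mp hxy.symm⟩
  · rintro ⟨x, hx, y, hy, k, hk⟩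
    exact ⟨(x : Circle2pi), ⟨x, hx, rfl⟩, ⟨y, hy, (circle_coe_eq.mpr ⟨k, hk⟩).symm⟩⟩

lemma no_mult (K k : ℤ) {z : ℝ} (hA : 2*π*K < z) (hB : z < 2*π*(K+1)) (h : z = k * (2*π)) :
    False := by
  have hpi := Real.pi_pos
  have h1 : (K : ℝ) < k := by nlinarith
  have h2 : (k : ℝ) < K + 1 := by push_cast at hA hB ⊢; nlinarith
  have h1' : K < k := by exact_mod_cast h1
  have h2' : k < K + 1 := by exact_mod_cast h2
  omega

section helpers
variable {α m : ℕ} (hα : 2 ≤ α) (hm : 3 ≤ m) {δ τ : ℝ}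
  (hδ : δ = 2*π/(2*α+2)) (hτ : τ = δ/(m+2))

include hα hδ in
lemma dpos : 0 < δ := by
  have := Real.pi_pos
  rw [hδ]; positivity

include hα hm hδ hτ in
lemma tfacts : 0 < τ ∧ ((m:ℝ)+2) * τ = δ ∧ (2*(α:ℝ)+2) * δ = 2*π := by
  have h0 := dpos hα hδ
  have hm2 : (0:ℝ) < (m:ℝ)+2 := by positivity
  have hA : (0:ℝ) < 2*(α:ℝ)+2 := by positivity
  refine ⟨by rw [hτ]; positivity, by rw [hτ]; field_simp, ?_⟩
  rw [hδ]; field_simp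

include hα hδ in
/-- long arcs meet when `b ≡ a + d`, `d ≤ α` (common point `aδ`). -/
lemma uu_meet {a b d : ℕ} (hd : d ≤ α)
    (hab : b = a + d ∨ b + (2*α+2) = a + d) :
    (arcSet (a*δ) (α*δ) ∩ arcSet (b*δ) (α*δ)).Nonempty := by
  have h0 := dpos hα hδ
  have h2π : (2*(α:ℝ)+2) * δ = 2*π := by rw [hδ]; field_simp
  have hd' : (d:ℝ) ≤ α := by exact_mod_cast hd
  have hd0 : (0:ℝ) ≤ d := Nat.cast_nonneg d
  apply arc_inter_iff.mpr
  refine ⟨(a:ℝ)*δ, ⟨by nlinarith [(Nat.cast_nonneg α : (0:ℝ) ≤ α)], le_refl _⟩,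
    (b:ℝ)*δ - d*δ, ⟨by nlinarith, by nlinarith⟩, ?_⟩
  rcases hab with h | h
  · have hc : (b:ℝ) = a + d := by exact_mod_cast h
    exact ⟨0, by rw [hc]; push_cast; ring⟩
  · have hc : (b:ℝ) + (2*α+2) = a + d := by exact_mod_cast h
    exact ⟨1, by push_cast; nlinarith⟩

include hα hδ in
lemma uu_disj {a b : ℕ} (hab : b = a + (α+1)) :
    ¬ (arcSet (a*δ) (α*δ) ∩ arcSet (b*δ) (α*δ)).Nonempty := by
  have h0 := dpos hα hδ
  have h2π : (2*(α:ℝ)+2) * δ = 2*π := by rw [hδ]; field_simp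
  rintro h
  obtain ⟨x, hx, y, hy, k, hk⟩ := arc_inter_iff.mp h
  have hb : (b:ℝ) = a + (α+1) := by exact_mod_cast hab
  obtain ⟨hx1, hx2⟩ := hx; obtain ⟨hy1, hy2⟩ := hy
  refine no_mult (-1) k ?_ ?_ hk
  · push_cast; nlinarith
  · push_cast; nlinarith

include hα hm hδ hτ in
lemma u_str_meet {a : ℕ} (ha : a ≤ α) :
    (arcSet (a*δ) (α*δ) ∩ arcSet (τ/2) τ).Nonempty := by
  have h0 := dpos hα hδ
  obtain ⟨ht0, -, -⟩ := tfacts hα hm hδ hτ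
  have ha' : (a:ℝ) ≤ α := by exact_mod_cast ha
  apply arc_inter_iff.mpr
  refine ⟨0, ⟨by nlinarith [(Nat.cast_nonneg a : (0:ℝ) ≤ a)], by positivity⟩,
    0, ⟨by nlinarith, by positivity⟩, 0, by norm_num⟩

include hα hm hδ hτ in
lemma u_str_disj {a : ℕ} (ha1 : α+1 ≤ a) (ha2 : a < 2*α+2) :
    ¬ (arcSet (a*δ) (α*δ) ∩ arcSet (τ/2) τ).Nonempty := by
  have h0 := dpos hα hδ
  obtain ⟨ht0, hmt, h2π⟩ := tfacts hα hm hδ hτ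
  have hm' : (3:ℝ) ≤ m := by exact_mod_cast hm
  have ha1' : (α:ℝ)+1 ≤ a := by exact_mod_cast ha1
  have ha2' : (a:ℝ) < 2*α+2 := by exact_mod_cast ha2
  have ha2'' : (a:ℝ) ≤ 2*α+1 := by exact_mod_cast Nat.lt_succ_iff.mp ha2
  rintro h
  obtain ⟨x, ⟨hx1, hx2⟩, y, ⟨hy1, hy2⟩, k, hk⟩ := arc_inter_iff.mp h
  refine no_mult 0 k ?_ ?_ hk
  · push_cast; nlinarith
  · push_cast; nlinarith

include hα hm hδ hτ in
lemma u_norm_meet {a b q d : ℕ} (hq : q + 2 ≤ m) (hd1 : 1 ≤ d) (hd2 : d ≤ α)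
    (hab : a = b + d ∨ a + (2*α+2) = b + d) :
    (arcSet (a*δ) (α*δ) ∩ arcSet (b*δ + (q+1)*τ + τ/2) (τ/2)).Nonempty := by
  have h0 := dpos hα hδ
  obtain ⟨ht0, hmt, h2π⟩ := tfacts hα hm hδ hτ
  have hm' : (3:ℝ) ≤ m := by exact_mod_cast hm
  have hq' : (q:ℝ) + 2 ≤ m := by exact_mod_cast hq
  have hd1' : (1:ℝ) ≤ d := by exact_mod_cast hd1
  have hd2' : (d:ℝ) ≤ α := by exact_mod_cast hd2
  apply arc_inter_iff.mpr
  refine ⟨(a:ℝ)*δ - (d*δ - (q+1)*τ), ⟨by nlinarith, by nlinarith⟩,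
    (b:ℝ)*δ + (q+1)*τ, ⟨by nlinarith, by nlinarith⟩, ?_⟩
  rcases hab with h | h
  · have hc : (a:ℝ) = b + d := by exact_mod_cast h
    exact ⟨0, by rw [hc]; push_cast; ring⟩
  · have hc : (a:ℝ) + (2*α+2) = b + d := by exact_mod_cast h
    exact ⟨-1, by push_cast; nlinarith⟩

include hα hm hδ hτ in
lemma u_norm_disj {a b q D : ℕ} (hq : q + 2 ≤ m) (hD1 : α+1 ≤ D) (hD2 : D ≤ 2*α+2)
    (hab : a = b + D ∨ a + (2*α+2) = b + D) :
    ¬ (arcSet (a*δ) (α*δ) ∩ arcSet (b*δ + (q+1)*τ + τ/2) (τ/2)).Nonempty := by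
  have h0 := dpos hα hδ
  obtain ⟨ht0, hmt, h2π⟩ := tfacts hα hm hδ hτ
  have hm' : (3:ℝ) ≤ m := by exact_mod_cast hm
  have hq' : (q:ℝ) + 2 ≤ m := by exact_mod_cast hq
  have hD1' : (α:ℝ)+1 ≤ D := by exact_mod_cast hD1
  have hD2' : (D:ℝ) ≤ 2*α+2 := by exact_mod_cast hD2
  rintro h
  obtain ⟨x, ⟨hx1, hx2⟩, y, ⟨hy1, hy2⟩, k, hk⟩ := arc_inter_iff.mp h
  rcases hab with hc | hc
  · have hc' : (a:ℝ) = b + D := by exact_mod_cast hc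
    refine no_mult 0 k ?_ ?_ hk
    · push_cast; nlinarith
    · push_cast; nlinarith
  · have hc' : (a:ℝ) + (2*α+2) = b + D := by exact_mod_cast hc
    refine no_mult (-1) k ?_ ?_ hk
    · push_cast; nlinarith
    · push_cast; nlinarith

include hα hm hδ hτ in
lemma str_str_meet : (arcSet (τ/2) τ ∩ arcSet (τ/2) τ).Nonempty := by
  obtain ⟨ht0, -, -⟩ := tfacts hα hm hδ hτ
  exact arc_inter_iff.mpr ⟨τ/2, ⟨by nlinarith, le_refl _⟩, τ/2, ⟨by nlinarith, le_refl _⟩,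
    0, by norm_num⟩

include hα hm hδ hτ in
lemma str_norm_disj {b q : ℕ} (hb : b < 2*α+2) (hq : q + 2 ≤ m) :
    ¬ (arcSet (τ/2) τ ∩ arcSet (b*δ + (q+1)*τ + τ/2) (τ/2)).Nonempty := by
  have h0 := dpos hα hδ
  obtain ⟨ht0, hmt, h2π⟩ := tfacts hα hm hδ hτ
  have hm' : (3:ℝ) ≤ m := by exact_mod_cast hm
  have hq' : (q:ℝ) + 2 ≤ m := by exact_mod_cast hq
  have hb' : (b:ℝ) ≤ 2*α+1 := by exact_mod_cast Nat.lt_succ_iff.mp hb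
  have hb0 : (0:ℝ) ≤ b := Nat.cast_nonneg b
  rintro h
  obtain ⟨x, ⟨hx1, hx2⟩, y, ⟨hy1, hy2⟩, k, hk⟩ := arc_inter_iff.mp h
  refine no_mult (-1) k ?_ ?_ hk
  · push_cast; nlinarith
  · push_cast; nlinarith

include hα hm hδ hτ in
lemma norm_norm_disj {b q b' q' : ℕ} (hb' : b' < 2*α+2) (hq : q + 2 ≤ m) (hq' : q' + 2 ≤ m)
    (hlt : b*(m+2)+q < b'*(m+2)+q') :
    ¬ (arcSet (b*δ + (q+1)*τ + τ/2) (τ/2) ∩ arcSet (b'*δ + (q'+1)*τ + τ/2) (τ/2)).Nonempty := by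
  have h0 := dpos hα hδ
  obtain ⟨ht0, hmt, h2π⟩ := tfacts hα hm hδ hτ
  have hm' : (3:ℝ) ≤ m := by exact_mod_cast hm
  have hq2 : (q:ℝ) + 2 ≤ m := by exact_mod_cast hq
  have hq2' : (q':ℝ) + 2 ≤ m := by exact_mod_cast hq'
  have hb2' : (b':ℝ) ≤ 2*α+1 := by exact_mod_cast Nat.lt_succ_iff.mp hb'
  have hb0 : (0:ℝ) ≤ b := Nat.cast_nonneg b
  have hq0 : (0:ℝ) ≤ q := Nat.cast_nonneg q
  have hlt' : (b:ℝ)*(m+2)+q + 1 ≤ b'*(m+2)+q' := by exact_mod_cast hlt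
  rintro h
  obtain ⟨x, ⟨hx1, hx2⟩, y, ⟨hy1, hy2⟩, k, hk⟩ := arc_inter_iff.mp h
  refine no_mult (-1) k ?_ ?_ hk
  · push_cast; nlinarith
  · push_cast; nlinarith

end helpers

namespace Stmt14
variable (α m : ℕ)

/-- vertex type: `2α+2` long arcs plus `(2α+2)(m-1)` tiny arcs. -/
abbrev V := Fin (2*α+2) ⊕ (Fin (2*α+2) × Fin (m-1))

/-- `i` and `i'` are opposite long arcs. -/
def Opp (i i' : Fin (2*α+2)) : Prop := i.val + (α+1) = i'.val ∨ i'.val + (α+1) = i.val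

/-- the long arc `u_i` covers the (closure of the) sector `(jδ, (j+1)δ)`. -/
def W (i j : Fin (2*α+2)) : Prop :=
  (j.val < i.val ∧ i.val ≤ j.val + α) ∨ (i.val + α + 2 ≤ j.val)

/-- the tiny arc `(j,q)` is a straddler (contains the point `0`). -/
def Str (j : Fin (2*α+2)) (q : Fin (m-1)) : Prop := j = 0 ∧ q.val < 2

instance decStr' : ∀ j q, Decidable (Str α m j q) := fun j q => by unfold Str; infer_instance

/-- adjacency between a long arc `i` and a tiny arc `(j,q)`. -/
def TAdj (i j : Fin (2*α+2)) (q : Fin (m-1)) : Prop :=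
  if Str α m j q then i.val ≤ α else W α i j

def adjFun : V α m → V α m → Prop
  | .inl i, .inl i' => i ≠ i' ∧ ¬ Opp α i i'
  | .inl i, .inr jq => TAdj α m i jq.1 jq.2
  | .inr jq, .inl i => TAdj α m i jq.1 jq.2
  | .inr jq, .inr jq' => jq ≠ jq' ∧ Str α m jq.1 jq.2 ∧ Str α m jq'.1 jq'.2

instance : DecidableEq (V α m) := inferInstance

instance decW : ∀ i j, Decidable (W α i j) := fun i j => by unfold W; infer_instance
instance decAdj : DecidableRel (adjFun α m) := fun a b => by
  rcases a with i | jq <;> rcases b with i' | jq' <;> unfold adjFun TAdj Opp <;> infer_instance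

def G : SimpleGraph (V α m) where
  Adj := adjFun α m
  symm := ⟨by
    rintro (i | ⟨j, q⟩) (i' | ⟨j', q'⟩) h <;> unfold adjFun at * <;> unfold Opp at *
    · exact ⟨Ne.symm h.1, fun hc => h.2 hc.symm⟩
    · exact h
    · exact h
    · exact ⟨Ne.symm h.1, h.2.2, h.2.1⟩⟩
  loopless := ⟨by rintro (i | ⟨j, q⟩) h <;> unfold adjFun at h <;> simp at h⟩

def δr : ℝ := 2*π/(2*α+2)
def τr : ℝ := δr α/(m+2)

def fArc : V α m → ℝ × ℝ
  | .inl i => (i.val * δr α, α * δr α)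
  | .inr jq => if Str α m jq.1 jq.2 then (τr α m/2, τr α m)
      else (jq.1.val * δr α + (jq.2.val+1) * τr α m + τr α m/2, τr α m/2)


end Stmt14

namespace Stmt14
variable {α m : ℕ}

lemma adj_eq : (G α m).Adj = adjFun α m := rfl

lemma fArc_inl (i : Fin (2*α+2)) : fArc α m (Sum.inl i) = ((i.val : ℝ) * δr α, (α:ℝ) * δr α) := rfl

lemma fArc_str {j : Fin (2*α+2)} {q : Fin (m-1)} (h : Str α m j q) :
    fArc α m (Sum.inr (j,q)) = (τr α m/2, τr α m) := by
  show (if Str α m j q then _ else _) = _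
  rw [if_pos h]

lemma fArc_norm {j : Fin (2*α+2)} {q : Fin (m-1)} (h : ¬ Str α m j q) :
    fArc α m (Sum.inr (j,q)) =
      ((j.val : ℝ) * δr α + ((q.val : ℝ)+1) * τr α m + τr α m/2, τr α m/2) := by
  show (if Str α m j q then _ else _) = _
  rw [if_neg h]

/-- the inl-inr case of the representation. -/
lemma case_ul (hα : 2 ≤ α) (hm : 3 ≤ m) (i j : Fin (2*α+2)) (q : Fin (m-1)) :
    TAdj α m i j q ↔
      (arcSet (fArc α m (Sum.inl i)).1 (fArc α m (Sum.inl i)).2 ∩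
        arcSet (fArc α m (Sum.inr (j,q))).1 (fArc α m (Sum.inr (j,q))).2).Nonempty := by
  have hδ : δr α = 2*π/(2*α+2) := rfl
  have hτ : τr α m = δr α/(m+2) := rfl
  have hq2 : q.val + 2 ≤ m := by have := q.isLt; omega
  have hi := i.isLt
  have hj := j.isLt
  by_cases hstr : Str α m j q
  · rw [fArc_str hstr]
    unfold TAdj
    rw [if_pos hstr, fArc_inl]
    constructor
    · intro h; exact u_str_meet hα hm hδ hτ h
    · intro h; by_contra hc; push_neg at hc
      exact u_str_disj hα hm hδ hτ hc hi h
  · rw [fArc_norm hstr]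
    unfold TAdj
    rw [if_neg hstr, fArc_inl]
    constructor
    · intro h
      rcases h with ⟨h1, h2⟩ | h3
      · exact u_norm_meet hα hm hδ hτ hq2 (d := i.val - j.val) (by omega) (by omega)
          (Or.inl (by omega))
      · exact u_norm_meet hα hm hδ hτ hq2 (d := i.val + (2*α+2) - j.val) (by omega) (by omega)
          (Or.inr (by omega))
    · intro h; by_contra hc
      unfold W at hc; push_neg at hc
      rcases Nat.lt_trichotomy i.val j.val with hlt | heq | hgt
      · exact u_norm_disj hα hm hδ hτ hq2 (D := i.val + (2*α+2) - j.val) (by omega) (by omega)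
          (Or.inr (by omega)) h
      · exact u_norm_disj hα hm hδ hτ hq2 (D := 2*α+2) (by omega) (by omega)
          (Or.inr (by omega)) h
      · exact u_norm_disj hα hm hδ hτ hq2 (D := i.val - j.val) (by omega) (by omega)
          (Or.inl (by omega)) h

lemma isCARep (hα : 2 ≤ α) (hm : 3 ≤ m) : IsCARep (G α m) (fArc α m) := by
  have hδ : δr α = 2*π/(2*α+2) := rfl
  have hτ : τr α m = δr α/(m+2) := rfl
  have h0 := dpos hα hδ
  obtain ⟨ht0, hmt, h2π⟩ := tfacts hα hm hδ hτ
  have hα' : (2:ℝ) ≤ α := by exact_mod_cast hα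
  have hm' : (3:ℝ) ≤ m := by exact_mod_cast hm
  constructor
  · rintro (i | ⟨j, q⟩)
    · rw [fArc_inl]; constructor
      · simp only; nlinarith
      · simp only; nlinarith
    · by_cases hstr : Str α m j q
      · rw [fArc_str hstr]; constructor
        · exact ht0
        · simp only; nlinarith
      · rw [fArc_norm hstr]; constructor
        · simp only; nlinarith
        · simp only; nlinarith
  · rintro (i | ⟨j, q⟩) (i' | ⟨j', q'⟩) huv
    · -- long-long
      rw [adj_eq]; unfold adjFun
      have hne : i ≠ i' := fun h => huv (by rw [h])
      have hne' : i.val ≠ i'.val := fun h => hne (Fin.ext h)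
      rw [fArc_inl, fArc_inl]
      have hi := i.isLt; have hi' := i'.isLt
      constructor
      · rintro ⟨-, hopp⟩
        unfold Opp at hopp; push_neg at hopp
        obtain ⟨h1, h2⟩ := hopp
        rcases Nat.lt_trichotomy i.val i'.val with hlt | heq | hgt
        · by_cases hd : i'.val - i.val ≤ α
          · exact uu_meet hα hδ (d := i'.val - i.val) hd (Or.inl (by omega))
          · have := uu_meet hα hδ (a := i'.val) (b := i.val)
              (d := i.val + (2*α+2) - i'.val) (by omega) (Or.inr (by omega))
            rwa [Set.inter_comm] at this
        · omega
        · by_cases hd : i.val - i'.val ≤ α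
          · have := uu_meet hα hδ (a := i'.val) (b := i.val) (d := i.val - i'.val) hd
              (Or.inl (by omega))
            rwa [Set.inter_comm] at this
          · exact uu_meet hα hδ (d := i'.val + (2*α+2) - i.val) (by omega) (Or.inr (by omega))
      · intro h
        refine ⟨hne, fun hopp => ?_⟩
        rcases hopp with h1 | h1
        · exact uu_disj hα hδ (by omega : i'.val = i.val + (α+1)) h
        · refine uu_disj hα hδ (by omega : i.val = i'.val + (α+1)) ?_
          rwa [Set.inter_comm] at h
    · -- long-tiny
      rw [adj_eq]; unfold adjFun
      exact case_ul hα hm i j' q'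
    · -- tiny-long
      rw [adj_eq]; unfold adjFun
      rw [Set.inter_comm]
      exact case_ul hα hm i' j q
    · -- tiny-tiny
      rw [adj_eq]; unfold adjFun
      have hne : (j,q) ≠ (j',q') := fun h => huv (by rw [h])
      have hq2 : q.val + 2 ≤ m := by have := q.isLt; omega
      have hq2' : q'.val + 2 ≤ m := by have := q'.isLt; omega
      by_cases h1 : Str α m j q <;> by_cases h2 : Str α m j' q'
      · rw [fArc_str h1, fArc_str h2]
        simp only [hne, h1, h2, ne_eq, not_false_eq_true, true_and, and_self, true_iff]
        exact str_str_meet hα hm hδ hτ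
      · rw [fArc_str h1, fArc_norm h2]
        constructor
        · rintro ⟨-, -, hc⟩; exact absurd hc h2
        · intro h; exact absurd h (str_norm_disj hα hm hδ hτ j'.isLt hq2')
      · rw [fArc_norm h1, fArc_str h2]
        constructor
        · rintro ⟨-, hc, -⟩; exact absurd hc h1
        · intro h
          rw [Set.inter_comm] at h
          exact absurd h (str_norm_disj hα hm hδ hτ j.isLt hq2)
      · rw [fArc_norm h1, fArc_norm h2]
        constructor
        · rintro ⟨-, hc, -⟩; exact absurd hc h1
        · intro h
          have hNN : j.val * (m+2) + q.val ≠ j'.val * (m+2) + q'.val := by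
            intro hc
            have hqq : q.val = q'.val := by
              have hmod : ((m+2)*j.val+q.val) % (m+2) = ((m+2)*j'.val+q'.val) % (m+2) := by
                rw [Nat.mul_comm (m+2) j.val, Nat.mul_comm (m+2) j'.val, hc]
              rwa [Nat.mul_add_mod, Nat.mul_add_mod, Nat.mod_eq_of_lt (by omega),
                Nat.mod_eq_of_lt (by omega)] at hmod
            have hjj : j.val = j'.val :=
              Nat.eq_of_mul_eq_mul_right (by omega) (Nat.add_right_cancel (hqq ▸ hc))
            exact hne (by rw [Prod.ext_iff]; exact ⟨Fin.ext hjj, Fin.ext hqq⟩)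
          rcases Nat.lt_or_ge (j.val * (m+2) + q.val) (j'.val * (m+2) + q'.val) with hlt | hge
          · exact absurd h (norm_norm_disj hα hm hδ hτ j'.isLt hq2 hq2' hlt)
          · rw [Set.inter_comm] at h
            exact absurd h (norm_norm_disj hα hm hδ hτ j.isLt hq2' hq2 (by omega))

-- COUNTING (to be appended inside namespace Stmt14 context)
section counting
open Finset
variable {α m : ℕ}

instance decTAdj : ∀ (i j : Fin (2*α+2)) (q : Fin (m-1)), Decidable (TAdj α m i j q) :=
  fun i j q => by unfold TAdj; infer_instance

def oppFin (α : ℕ) (i : Fin (2*α+2)) : Fin (2*α+2) :=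
  ⟨if i.val ≤ α then i.val + (α+1) else i.val - (α+1), by have := i.isLt; split <;> omega⟩

lemma opp_iff {i i' : Fin (2*α+2)} : Opp α i i' ↔ i' = oppFin α i := by
  unfold Opp oppFin
  rw [Fin.ext_iff]
  have := i.isLt; have := i'.isLt
  simp only []
  split <;> omega

lemma card_filter_sum {A B : Type*} [Fintype A] [Fintype B] [DecidableEq A] [DecidableEq B]
    (P : A ⊕ B → Prop) [DecidablePred P] :
    (univ.filter P).card
      = (univ.filter (fun a => P (.inl a))).card + (univ.filter (fun b => P (.inr b))).card := by
  have key : (univ.filter P)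
      = ((univ.filter (fun a => P (.inl a))).map ⟨Sum.inl, Sum.inl_injective⟩)
        ∪ ((univ.filter (fun b => P (.inr b))).map ⟨Sum.inr, Sum.inr_injective⟩) := by
    ext w
    rcases w with a | b <;> simp
  rw [key, Finset.card_union_of_disjoint (by simp [Finset.disjoint_left]),
    Finset.card_map, Finset.card_map]

lemma cardW (hα : 2 ≤ α) (i : Fin (2*α+2)) :
    (univ.filter (fun j => W α i j)).card = α := by
  have hi := i.isLt
  have hcov : ∀ x ∈ Finset.Ico (i.val - α) i.val ∪ Finset.Ico (i.val+α+2) (2*α+2), x < 2*α+2 := by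
    intro x hx
    simp only [Finset.mem_union, Finset.mem_Ico] at hx
    omega
  have : univ.filter (fun j => W α i j) = Finset.attachFin _ hcov := by
    ext x
    have := x.isLt
    simp only [Finset.mem_filter, Finset.mem_univ, true_and, Finset.mem_attachFin,
      Finset.mem_union, Finset.mem_Ico]
    simp only [W]
    omega
  rw [this, Finset.card_attachFin, Finset.card_union_of_disjoint, Nat.card_Ico, Nat.card_Ico]
  · omega
  · simp only [Finset.disjoint_left, Finset.mem_Ico]
    intro x hx hx2
    omega

lemma card2 (hm : 3 ≤ m) : (univ.filter (fun q : Fin (m-1) => q.val < 2)).card = 2 := by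
  have hcov : ∀ x ∈ Finset.range 2, x < m - 1 := by intro x hx; simp at hx; omega
  have : univ.filter (fun q : Fin (m-1) => q.val < 2) = Finset.attachFin _ hcov := by
    ext x
    simp [Finset.mem_attachFin]
  rw [this, Finset.card_attachFin, Finset.card_range]

lemma filter_W_prod (i : Fin (2*α+2)) :
    (univ.filter (fun jq : Fin (2*α+2) × Fin (m-1) => W α i jq.1))
      = (univ.filter (fun j => W α i j)) ×ˢ (univ : Finset (Fin (m-1))) := by
  ext ⟨j, q⟩
  simp [Finset.mem_product]

lemma filter_str_prod :
    (univ.filter (fun jq : Fin (2*α+2) × Fin (m-1) => Str α m jq.1 jq.2))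
      = ({(0 : Fin (2*α+2))} : Finset _) ×ˢ (univ.filter (fun q : Fin (m-1) => q.val < 2)) := by
  ext ⟨j, q⟩
  simp only [Finset.mem_filter, Finset.mem_product, Finset.mem_univ, true_and,
    Finset.mem_singleton]
  simp only [Str]

lemma neighbor_card (v : V α m) :
    ((G α m).neighborSet v).ncard = (univ.filter (fun w => adjFun α m v w)).card := by
  have : (G α m).neighborSet v = ↑(univ.filter (fun w => adjFun α m v w)) := by
    ext w
    simp [SimpleGraph.mem_neighborSet, adj_eq]
  rw [this, Set.ncard_coe_finset]

lemma cardL_exact (hα : 2 ≤ α) (i : Fin (2*α+2)) :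
    (univ.filter (fun i' => adjFun α m (Sum.inl i) (Sum.inl i'))).card = 2*α := by
  have : (univ.filter (fun i' => adjFun α m (Sum.inl i) (Sum.inl i')))
      = (Finset.univ \ {i, oppFin α i} : Finset (Fin (2*α+2))) := by
    ext i'
    simp only [Finset.mem_filter, Finset.mem_univ, true_and, Finset.mem_sdiff,
      Finset.mem_insert, Finset.mem_singleton]
    simp only [adjFun, opp_iff]
    constructor
    · rintro ⟨h1, h2⟩; push_neg; exact ⟨fun h => h1 h.symm, h2⟩
    · intro h; push_neg at h; exact ⟨fun h' => h.1 h'.symm, h.2⟩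
  rw [this, Finset.card_sdiff_of_subset (Finset.subset_univ _), Finset.card_univ]
  have hne : i ≠ oppFin α i := by
    intro h
    rw [Fin.ext_iff] at h
    revert h
    unfold oppFin
    have := i.isLt
    simp only []
    split <;> omega
  rw [Finset.card_insert_of_notMem (by simpa using hne), Finset.card_singleton]
  simp only [Fintype.card_fin]
  omega

end counting

section degrees
open Finset
variable {α m : ℕ}

lemma cardR_le (hα : 2 ≤ α) (hm : 3 ≤ m) (i : Fin (2*α+2)) :
    (univ.filter (fun jq : Fin (2*α+2) × Fin (m-1) => adjFun α m (Sum.inl i) (Sum.inr jq))).card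
      ≤ α * (m-1) + 2 := by
  have hsub : (univ.filter (fun jq : Fin (2*α+2) × Fin (m-1) => adjFun α m (Sum.inl i) (Sum.inr jq)))
      ⊆ (univ.filter (fun jq : Fin (2*α+2) × Fin (m-1) => W α i jq.1))
        ∪ (univ.filter (fun jq : Fin (2*α+2) × Fin (m-1) => Str α m jq.1 jq.2)) := by
    intro ⟨j, q⟩ hjq
    simp only [Finset.mem_filter, Finset.mem_univ, true_and, Finset.mem_union] at hjq ⊢
    simp only [adjFun, TAdj] at hjq ⊢
    by_cases hstr : Str α m j q
    · right; exact hstr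
    · left; rwa [if_neg hstr] at hjq
  calc _ ≤ _ := Finset.card_le_card hsub
    _ ≤ (univ.filter (fun jq : Fin (2*α+2) × Fin (m-1) => W α i jq.1)).card
        + (univ.filter (fun jq : Fin (2*α+2) × Fin (m-1) => Str α m jq.1 jq.2)).card :=
      Finset.card_union_le _ _
    _ = α * (m-1) + 2 := by
      rw [filter_W_prod, filter_str_prod, Finset.card_product, Finset.card_product,
        cardW hα, card2 hm, Finset.card_singleton, Finset.card_univ, Fintype.card_fin,
        one_mul]

lemma deg_le (hα : 2 ≤ α) (hm : 3 ≤ m) (v : V α m) :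
    ((G α m).neighborSet v).ncard ≤ m * α + (α + 2) := by
  rw [neighbor_card]
  have hms : α * (m - 1) + α = α * m := by
    have h : m - 1 + 1 = m := by omega
    calc α*(m-1) + α = α*((m-1)+1) := by ring
      _ = α*m := by rw [h]
  have hcm : m * α = α * m := Nat.mul_comm m α
  rcases v with i | ⟨j, q⟩
  · rw [card_filter_sum]
    have h1 := cardL_exact (m := m) hα i
    have h2 := cardR_le hα hm i
    linarith
  · -- tiny vertices: at most (2α+2) long-arc neighbors and 2 straddler neighbors
    rw [card_filter_sum]
    have h1 : (univ.filter (fun i' => adjFun α m (Sum.inr (j,q)) (Sum.inl i'))).card ≤ 2*α+2 := by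
      calc _ ≤ (univ : Finset (Fin (2*α+2))).card := Finset.card_le_card (Finset.subset_univ _)
        _ = 2*α+2 := by rw [Finset.card_univ, Fintype.card_fin]
    have h2 : (univ.filter
        (fun jq' : Fin (2*α+2) × Fin (m-1) => adjFun α m (Sum.inr (j,q)) (Sum.inr jq'))).card
          ≤ 2 := by
      have hsub : (univ.filter
          (fun jq' : Fin (2*α+2) × Fin (m-1) => adjFun α m (Sum.inr (j,q)) (Sum.inr jq')))
          ⊆ (univ.filter (fun jq' : Fin (2*α+2) × Fin (m-1) => Str α m jq'.1 jq'.2)) := by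
        intro ⟨j', q'⟩ h
        simp only [Finset.mem_filter, Finset.mem_univ, true_and] at h ⊢
        simp only [adjFun] at h ⊢
        exact h.2.2
      calc _ ≤ _ := Finset.card_le_card hsub
        _ = 2 := by
          rw [filter_str_prod, Finset.card_product, card2 hm, Finset.card_singleton, one_mul]
    have h3 : 3 * α ≤ m * α := Nat.mul_le_mul_right α hm
    linarith

lemma deg_zero (hα : 2 ≤ α) (hm : 3 ≤ m) :
    ((G α m).neighborSet (Sum.inl (0 : Fin (2*α+2)))).ncard = m * α + (α + 2) := by
  rw [neighbor_card, card_filter_sum, cardL_exact hα]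
  have hR : (univ.filter
      (fun jq : Fin (2*α+2) × Fin (m-1) => adjFun α m (Sum.inl (0 : Fin (2*α+2))) (Sum.inr jq)))
      = (univ.filter (fun jq : Fin (2*α+2) × Fin (m-1) => W α 0 jq.1))
        ∪ (univ.filter (fun jq : Fin (2*α+2) × Fin (m-1) => Str α m jq.1 jq.2)) := by
    ext ⟨j, q⟩
    simp only [Finset.mem_filter, Finset.mem_univ, true_and, Finset.mem_union]
    simp only [adjFun, TAdj]
    by_cases hstr : Str α m j q
    · rw [if_pos hstr]
      simp [hstr]
    · rw [if_neg hstr]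
      simp [hstr]
  have hdisj : Disjoint
      (univ.filter (fun jq : Fin (2*α+2) × Fin (m-1) => W α 0 jq.1))
      (univ.filter (fun jq : Fin (2*α+2) × Fin (m-1) => Str α m jq.1 jq.2)) := by
    simp only [Finset.disjoint_left, Finset.mem_filter, Finset.mem_univ, true_and]
    rintro ⟨j, q⟩ hW hS
    unfold W at hW
    unfold Str at hS
    obtain ⟨hS1, hS2⟩ := hS
    have hj0 : j.val = 0 := by have hj : j = 0 := hS1; rw [hj, Fin.val_zero]
    have hv0 : (0 : Fin (2*α+2)).val = 0 := Fin.val_zero _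
    simp only [] at hW
    omega
  rw [hR, Finset.card_union_of_disjoint hdisj, filter_W_prod, filter_str_prod,
    Finset.card_product, Finset.card_product, cardW hα, card2 hm, Finset.card_singleton,
    Finset.card_univ, Fintype.card_fin, one_mul]
  have hms : α * (m - 1) + α = α * m := by
    have h : m - 1 + 1 = m := by omega
    calc α*(m-1) + α = α*((m-1)+1) := by ring
      _ = α*m := by rw [h]
  have hcm : m * α = α * m := Nat.mul_comm m α
  linarith

end degrees

section boxicity
variable {α m : ℕ}

lemma four_intervals {a1 a2 b1 b2 c1 c2 d1 d2 : ℝ} (ha : a1 ≤ a2) (hb : b1 ≤ b2)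
    (hAB : ¬(Set.Icc a1 a2 ∩ Set.Icc b1 b2).Nonempty)
    (hCD : ¬(Set.Icc c1 c2 ∩ Set.Icc d1 d2).Nonempty)
    (hAC : (Set.Icc a1 a2 ∩ Set.Icc c1 c2).Nonempty)
    (hAD : (Set.Icc a1 a2 ∩ Set.Icc d1 d2).Nonempty)
    (hBC : (Set.Icc b1 b2 ∩ Set.Icc c1 c2).Nonempty)
    (hBD : (Set.Icc b1 b2 ∩ Set.Icc d1 d2).Nonempty) : False := by
  obtain ⟨p, ⟨hp1, hp2⟩, ⟨hp3, hp4⟩⟩ := hAC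
  obtain ⟨r, ⟨hr1, hr2⟩, ⟨hr3, hr4⟩⟩ := hBC
  obtain ⟨s, ⟨hs1, hs2⟩, ⟨hs3, hs4⟩⟩ := hAD
  obtain ⟨t, ⟨ht1, ht2⟩, ⟨ht3, ht4⟩⟩ := hBD
  have key : a2 < b1 ∨ b2 < a1 := by
    by_contra hc
    push_neg at hc
    exact hAB ⟨max a1 b1, ⟨⟨le_max_left _ _, max_le ha hc.1⟩, le_max_right _ _,
      max_le hc.2 hb⟩⟩
  rcases key with h | h
  · exact hCD ⟨a2, ⟨by linarith, by linarith⟩, by linarith, by linarith⟩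
  · exact hCD ⟨b2, ⟨by linarith, by linarith⟩, by linarith, by linarith⟩

lemma notBox (hα : 2 ≤ α) : ¬ BoxicityLE (G α m) α := by
  rintro ⟨I, hIcc, hadj⟩
  set uu : Fin (α+1) → V α m := fun b => Sum.inl ⟨b.val, by have := b.isLt; omega⟩ with huu
  set ww : Fin (α+1) → V α m := fun b => Sum.inl ⟨b.val + (α+1), by have := b.isLt; omega⟩
    with hww
  have hne : ∀ b, uu b ≠ ww b := by
    intro b h
    rw [huu, hww] at h
    simp only [Sum.inl.injEq, Fin.mk.injEq] at h
    omega
  have hnadj : ∀ b, ¬ (G α m).Adj (uu b) (ww b) := by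
    intro b
    rw [adj_eq]
    rintro ⟨-, hopp⟩
    exact hopp (Or.inl rfl)
  have hex : ∀ b, ∃ i, ¬ (I i (uu b) ∩ I i (ww b)).Nonempty := by
    intro b
    by_contra hc
    push_neg at hc
    exact hnadj b (((hadj (uu b) (ww b) (hne b))).mpr (by simpa using hc))
  choose c hc using hex
  obtain ⟨b, b', hbb', hcc⟩ := Fintype.exists_ne_map_eq_of_card_lt c
    (by simp only [Fintype.card_fin]; omega)
  have hvne : ∀ (x y : V α m), (G α m).Adj x y → ∀ i, (I i x ∩ I i y).Nonempty := by
    intro x y hxy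
    exact (hadj x y (SimpleGraph.Adj.ne hxy)).mp hxy
  have hb' : b.val ≠ b'.val := fun h => hbb' (Fin.ext h)
  have hblt := b.isLt; have hblt' := b'.isLt
  have adj1 : (G α m).Adj (uu b) (uu b') := by
    rw [adj_eq]
    refine ⟨fun h => ?_, fun hopp => ?_⟩
    · simp only [huu, Sum.inl.injEq, Fin.mk.injEq] at h; omega
    · unfold Opp at hopp; simp only [huu] at hopp; omega
  have adj2 : (G α m).Adj (uu b) (ww b') := by
    rw [adj_eq]
    refine ⟨fun h => ?_, fun hopp => ?_⟩
    · simp only [huu, hww, Sum.inl.injEq, Fin.mk.injEq] at h; omega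
    · unfold Opp at hopp; simp only [huu, hww] at hopp; omega
  have adj3 : (G α m).Adj (ww b) (uu b') := by
    rw [adj_eq]
    refine ⟨fun h => ?_, fun hopp => ?_⟩
    · simp only [huu, hww, Sum.inl.injEq, Fin.mk.injEq] at h; omega
    · unfold Opp at hopp; simp only [huu, hww] at hopp; omega
  have adj4 : (G α m).Adj (ww b) (ww b') := by
    rw [adj_eq]
    refine ⟨fun h => ?_, fun hopp => ?_⟩
    · simp only [hww, Sum.inl.injEq, Fin.mk.injEq] at h; omega
    · unfold Opp at hopp; simp only [hww] at hopp; omega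
  obtain ⟨a1, a2, ha, hA⟩ := hIcc (c b) (uu b)
  obtain ⟨b1, b2, hbi, hB⟩ := hIcc (c b) (ww b)
  obtain ⟨c1, c2, hci, hC⟩ := hIcc (c b) (uu b')
  obtain ⟨d1, d2, hdi, hD⟩ := hIcc (c b) (ww b')
  have hAB := hc b
  have hCD := hc b'
  rw [← hcc] at hCD
  rw [hA, hB] at hAB
  rw [hC, hD] at hCD
  have hAC := hvne _ _ adj1 (c b); rw [hA, hC] at hAC
  have hAD := hvne _ _ adj2 (c b); rw [hA, hD] at hAD
  have hBC := hvne _ _ adj3 (c b); rw [hB, hC] at hBC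
  have hBD := hvne _ _ adj4 (c b); rw [hB, hD] at hBD
  exact four_intervals ha hbi hAB hCD hAC hAD hBC hBD

end boxicity

end Stmt14


end Aux

/-- for every `α ≥ 2` and every sufficiently large `n` divisible by
`2α+2`, there is a circular arc graph on `n` vertices with maximum degree exactly
`nα/(2(α+1)) + (α+2)` and boxicity strictly greater than `α`. -/
theorem stmt14 (α : ℕ) (hα : 2 ≤ α) :
    ∃ N : ℕ, ∀ n : ℕ, N ≤ n → (2 * α + 2) ∣ n →
      ∃ G : SimpleGraph (Fin n),
        (∃ f : Fin n → ℝ × ℝ, IsCARep G f) ∧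
        (∀ v, (G.neighborSet v).ncard ≤ n * α / (2 * (α + 1)) + (α + 2)) ∧
        (∃ v, (G.neighborSet v).ncard = n * α / (2 * (α + 1)) + (α + 2)) ∧
        ¬ BoxicityLE G α := by
  classical
  refine ⟨6*α+6, ?_⟩
  rintro n hn ⟨m, rfl⟩
  have hm : 3 ≤ m := by
    by_contra hcon
    push_neg at hcon
    have h2 : m ≤ 2 := by omega
    have hle : (2*α+2)*m ≤ (2*α+2)*2 := Nat.mul_le_mul_left _ h2
    have h22 : (2*α+2)*2 = 4*α+4 := by ring
    linarith
  -- the value of the degree bound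
  have hval : (2*α+2)*m * α / (2 * (α + 1)) + (α + 2) = m * α + (α + 2) := by
    have h1 : (2*α+2)*m*α = (2*(α+1))*(m*α) := by ring
    rw [h1, Nat.mul_div_cancel_left _ (by omega : 0 < 2*(α+1))]
  -- the equivalence
  have hsplit : (2*α+2) + (2*α+2)*(m-1) = (2*α+2)*m := by
    calc (2*α+2) + (2*α+2)*(m-1) = (2*α+2)*(1+(m-1)) := by ring
      _ = (2*α+2)*m := by rw [show 1+(m-1) = m by omega]
  let e : Fin ((2*α+2)*m) ≃ Stmt14.V α m :=
    (finCongr hsplit.symm).trans (finSumFinEquiv.symm.trans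
      (Equiv.sumCongr (Equiv.refl _) finProdFinEquiv.symm))
  refine ⟨(Stmt14.G α m).comap e, ?_, ?_, ?_, ?_⟩
  · -- circular-arc representation
    obtain ⟨hlen, hiff⟩ := Stmt14.isCARep (α := α) (m := m) hα hm
    exact ⟨Stmt14.fArc α m ∘ e, fun v => hlen (e v),
      fun u v huv => hiff (e u) (e v) (e.injective.ne huv)⟩
  · -- degree upper bound
    intro v
    rw [hval]
    have hset : ((Stmt14.G α m).comap e).neighborSet v
        = e.symm '' ((Stmt14.G α m).neighborSet (e v)) := by
      ext w
      simp only [SimpleGraph.mem_neighborSet, SimpleGraph.comap_adj, Set.mem_image]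
      constructor
      · intro h; exact ⟨e w, h, e.symm_apply_apply w⟩
      · rintro ⟨x, hx, rfl⟩; simpa [e.apply_symm_apply] using hx
    rw [hset, Set.ncard_image_of_injective _ e.symm.injective]
    exact Stmt14.deg_le hα hm (e v)
  · -- degree equality witness
    refine ⟨e.symm (Sum.inl 0), ?_⟩
    rw [hval]
    have hset : ((Stmt14.G α m).comap e).neighborSet (e.symm (Sum.inl 0))
        = e.symm '' ((Stmt14.G α m).neighborSet (e (e.symm (Sum.inl 0)))) := by
      ext w
      simp only [SimpleGraph.mem_neighborSet, SimpleGraph.comap_adj, Set.mem_image]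
      constructor
      · intro h; exact ⟨e w, h, e.symm_apply_apply w⟩
      · rintro ⟨x, hx, rfl⟩; simpa [e.apply_symm_apply] using hx
    rw [hset, Set.ncard_image_of_injective _ e.symm.injective, e.apply_symm_apply]
    exact Stmt14.deg_zero hα hm
  · -- boxicity
    rintro ⟨I, h1, h2⟩
    refine Stmt14.notBox (m := m) hα ⟨fun i w => I i (e.symm w), fun i v => h1 i _, ?_⟩
    intro u v huv
    have := h2 (e.symm u) (e.symm v) (e.symm.injective.ne huv)
    simpa [SimpleGraph.comap_adj, e.apply_symm_apply] using this



end
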